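/- Let S be a sequence of meromorphic functions on a domain D ⊆ ℂ, α an ordinal number, and z₀ ∈ D. Then z₀ is a non-C_α-point of S if and only if z₀ ∈ E_D^(α), where E is the set of non-C₀-points of S in D. -/

import Mathlib

open Filter Set Metric

/-- Iterated (transfinite) derived set of `E` with respect to `A`:
`E_A^(0) = E`, `E_A^(α+1) = (E_A^(α))' ∩ A`, and at limit stages the
intersection over `1 ≤ β < α`. -/
noncomputable def derivIter (A : Set ℂ) (E : Set ℂ) (o : Ordinal) : Set ℂ :=
  Ordinal.limitRecOn o E
    (fun _ ih => {z | z ∈ A ∧ AccPt z (Filter.principal ih)})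
    (fun o _ ih => ⋂ (β : Ordinal) (h : β < o) (_ : 1 ≤ β), ih β h)

/-- The chordal (spherical) distance on the Riemann sphere, with `none` playing the
role of the point at infinity. -/
noncomputable def sphDist : Option ℂ → Option ℂ → ℝ
  | some a, some b =>
      2 * ‖a - b‖ /
        (Real.sqrt (1 + ‖a‖ ^ 2) * Real.sqrt (1 + ‖b‖ ^ 2))
  | some a, none => 2 / Real.sqrt (1 + ‖a‖ ^ 2)
  | none, some b => 2 / Real.sqrt (1 + ‖b‖ ^ 2)
  | none, none => 0

/-- `z₀` is a `C₀`-point of the sequence `S` in `D`: on some disk `Δ(z₀,r) ⊆ D`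
the sequence converges uniformly with respect to the spherical distance
(to a limit function with values in the Riemann sphere). -/
def C0Point (D : Set ℂ) (S : ℕ → ℂ → ℂ) (z₀ : ℂ) : Prop :=
  ∃ r > (0 : ℝ), Metric.ball z₀ r ⊆ D ∧
    ∃ g : ℂ → Option ℂ, ∀ ε > (0 : ℝ), ∃ N : ℕ, ∀ n ≥ N, ∀ z ∈ Metric.ball z₀ r,
      sphDist (some (S n z)) (g z) < ε

/-- `CPoint D S α z₀` : `z₀` is a `C_α`-point of `S` in `D`. At a successor `α`,
every point of some punctured disk `Δ'(z₀,r)` with `Δ(z₀,r) ⊆ D` is a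
`C_{α-1}`-point; at a limit `α`, `z₀` is a `C_β`-point for some `β < α`. -/
noncomputable def CPoint (D : Set ℂ) (S : ℕ → ℂ → ℂ) (α : Ordinal) : ℂ → Prop :=
  Ordinal.limitRecOn α (C0Point D S)
    (fun _ ih => fun z₀ => ∃ r > (0 : ℝ), Metric.ball z₀ r ⊆ D ∧
      ∀ z ∈ Metric.ball z₀ r \ {z₀}, ih z)
    (fun α _ ih => fun z₀ => ∃ β : Ordinal, ∃ h : β < α, ih β h z₀)

-- unfolding lemmas
theorem derivIter_zero (A E) : derivIter A E 0 = E := by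
  simp [derivIter]

theorem derivIter_succ (A E o) :
    derivIter A E (Order.succ o) = {z | z ∈ A ∧ AccPt z (𝓟 (derivIter A E o))} := by
  simp [derivIter]

theorem derivIter_limit (A E o) (h : Order.IsSuccLimit o) :
    derivIter A E o = ⋂ (β : Ordinal) (_ : β < o) (_ : 1 ≤ β), derivIter A E β := by
  rw [derivIter, Ordinal.limitRecOn_limit _ _ _ _ h]; rfl

theorem CPoint_zero (D S) : CPoint D S 0 = C0Point D S := by
  simp [CPoint]

theorem CPoint_succ (D S o) :
    CPoint D S (Order.succ o) = fun z₀ => ∃ r > (0 : ℝ), Metric.ball z₀ r ⊆ D ∧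
      ∀ z ∈ Metric.ball z₀ r \ {z₀}, CPoint D S o z := by
  simp [CPoint]

theorem CPoint_limit (D S o) (h : Order.IsSuccLimit o) :
    CPoint D S o = fun z₀ => ∃ β : Ordinal, β < o ∧ CPoint D S β z₀ := by
  rw [CPoint, Ordinal.limitRecOn_limit _ _ _ _ h]
  ext z₀; exact ⟨fun ⟨β, hβ, hz⟩ => ⟨β, hβ, hz⟩, fun ⟨β, hβ, hz⟩ => ⟨β, hβ, hz⟩⟩

theorem derivIter_subset (A : Set ℂ) (E : Set ℂ) (hE : E ⊆ A) (o : Ordinal) :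
    derivIter A E o ⊆ A := by
  induction o using Ordinal.limitRecOn with
  | zero => rwa [derivIter_zero]
  | add_one o ih => rw [Ordinal.add_one_eq_succ, derivIter_succ]; exact fun z hz => hz.1
  | limit o ho ih =>
    rw [derivIter_limit _ _ _ ho]
    intro z hz
    have h1 : z ∈ derivIter A E 1 := by
      simp only [mem_iInter] at hz
      exact hz 1 (Ordinal.one_lt_of_isSuccLimit ho) le_rfl
    have : derivIter A E 1 ⊆ A := by
      have : (1 : Ordinal) = Order.succ 0 := by simp
      rw [this, derivIter_succ]; exact fun z hz => hz.1
    exact this h1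

theorem c0_open {D S z₀} (h : C0Point D S z₀) :
    ∃ r > (0 : ℝ), ∀ w ∈ Metric.ball z₀ r, C0Point D S w := by
  obtain ⟨r, hr, hsub, g, hg⟩ := h
  refine ⟨r, hr, fun w hw => ?_⟩
  refine ⟨r - dist w z₀, by simpa [dist_comm] using hw, ?_, g, ?_⟩
  · exact (ball_subset_ball' (by ring_nf; rfl)).trans hsub
  · intro ε hε
    obtain ⟨N, hN⟩ := hg ε hε
    exact ⟨N, fun n hn z hz => hN n hn z (ball_subset_ball' (by ring_nf; rfl) hz)⟩

theorem key (D : Set ℂ) (hD : IsOpen D) (S : ℕ → ℂ → ℂ) (α : Ordinal) :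
    ∀ z₀ ∈ D, (¬ CPoint D S α z₀ ↔ z₀ ∈ derivIter D {z | z ∈ D ∧ ¬ C0Point D S z} α) := by
  set E : Set ℂ := {z | z ∈ D ∧ ¬ C0Point D S z} with hE
  have hEsub : E ⊆ D := fun z hz => hz.1
  -- E is closed in D
  have hEclosed : ∀ z₀ ∈ D, AccPt z₀ (𝓟 E) → z₀ ∈ E := by
    intro z₀ hz₀ hacc
    refine ⟨hz₀, fun hC0 => ?_⟩
    obtain ⟨r, hr, hball⟩ := c0_open hC0
    rw [accPt_iff_nhds] at hacc
    obtain ⟨y, ⟨hy1, hy2⟩, hy3⟩ := hacc (Metric.ball z₀ r) (ball_mem_nhds _ hr)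
    exact hy2.2 (hball y hy1)
  induction α using Ordinal.limitRecOn with
  | zero =>
    intro z₀ hz₀
    rw [CPoint_zero, derivIter_zero]
    exact ⟨fun h => ⟨hz₀, h⟩, fun h => h.2⟩
  | add_one β ih =>
    intro z₀ hz₀
    rw [Ordinal.add_one_eq_succ, CPoint_succ, derivIter_succ]
    constructor
    · intro h
      refine ⟨hz₀, accPt_iff_nhds.mpr fun U hU => ?_⟩
      by_contra hc
      push_neg at hc
      obtain ⟨r₁, hr₁, hU₁⟩ := Metric.mem_nhds_iff.mp hU
      obtain ⟨r₂, hr₂, hD₂⟩ := Metric.isOpen_iff.mp hD z₀ hz₀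
      refine h ⟨min r₁ r₂, lt_min hr₁ hr₂, (ball_subset_ball (min_le_right _ _)).trans hD₂, ?_⟩
      intro z hz
      have hzD : z ∈ D := hD₂ (ball_subset_ball (min_le_right _ _) hz.1)
      by_contra hzC
      have := (ih z hzD).mp hzC
      exact hz.2 (hc z ⟨hU₁ (ball_subset_ball (min_le_left _ _) hz.1), this⟩)
    · rintro ⟨-, hacc⟩ ⟨r, hr, hsub, hball⟩
      rw [accPt_iff_nhds] at hacc
      obtain ⟨y, ⟨hy1, hy2⟩, hy3⟩ := hacc (Metric.ball z₀ r) (ball_mem_nhds _ hr)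
      have hyD : y ∈ D := derivIter_subset D E hEsub β hy2
      exact (ih y hyD).mpr hy2 (hball y ⟨hy1, hy3⟩)
  | limit o ho ih =>
    intro z₀ hz₀
    rw [CPoint_limit _ _ _ ho, derivIter_limit _ _ _ ho]
    simp only [mem_iInter, not_exists, not_and]
    constructor
    · intro h
      intro β hβ _
      exact (ih β hβ z₀ hz₀).mp (h β hβ)
    · intro h β hβ
      rcases eq_or_ne β 0 with rfl | hβ0
      · rw [CPoint_zero]
        have h1 : z₀ ∈ derivIter D E 1 := h 1 (Ordinal.one_lt_of_isSuccLimit ho) le_rfl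
        have : (1 : Ordinal) = Order.succ 0 := by simp
        rw [this, derivIter_succ] at h1
        rw [derivIter_zero] at h1
        exact (hEclosed z₀ hz₀ h1.2).2
      · exact (ih β hβ z₀ hz₀).mpr (h β hβ (Ordinal.one_le_iff_ne_zero.mpr hβ0))

theorem stmt_14 (D : Set ℂ) (hD : IsOpen D) (hDc : IsConnected D)
    (S : ℕ → ℂ → ℂ) (hS : ∀ n, MeromorphicOn (S n) D)
    (α : Ordinal) (z₀ : ℂ) (hz₀ : z₀ ∈ D) :
    ¬ CPoint D S α z₀ ↔ z₀ ∈ derivIter D {z | z ∈ D ∧ ¬ C0Point D S z} α :=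
  key D hD S α z₀ hz₀
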